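/- Let S be a finite set of positive integers and 𝔥 = {T ⊆ S : T ≠ ∅, ∏_{s∈T} s is a perfect square}. Then ∑_{T∈𝔥} (−1)^{#T} ≥ −1. -/
import Mathlib

open Finset

private lemma sq_of_mul_sq {x c : ℕ} (hc : 0 < c) (h : IsSquare (x * (c * c))) :
    IsSquare x := by
  obtain ⟨d, hd⟩ := h
  have hdvd : c ^ 2 ∣ d ^ 2 := ⟨x, by rw [pow_two, pow_two, ← hd]; ring⟩
  have hcd : c ∣ d := (Nat.pow_dvd_pow_iff two_ne_zero).mp hdvd
  obtain ⟨e, rfl⟩ := hcd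
  refine ⟨e, ?_⟩
  have h2 : x * (c * c) = (e * e) * (c * c) := by rw [hd]; ring
  exact Nat.eq_of_mul_eq_mul_right (Nat.mul_pos hc hc) h2

private lemma card_symmDiff_eq (s t : Finset ℕ) :
    (symmDiff s t).card + 2 * (s ∩ t).card = s.card + t.card := by
  have h1 : ((s ∪ t) \ (s ∩ t)).card + (s ∩ t).card = (s ∪ t).card :=
    card_sdiff_add_card_eq_card (inter_subset_union)
  have h2 : (s ∪ t).card + (s ∩ t).card = s.card + t.card := card_union_add_card_inter s t
  have h3 : symmDiff s t = (s ∪ t) \ (s ∩ t) := by rw [symmDiff_eq_sup_sdiff_inf, sup_eq_union, inf_eq_inter]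
  rw [← h3] at h1
  omega

private lemma sign_symmDiff (s t : Finset ℕ) :
    (-1 : ℤ) ^ (symmDiff s t).card = (-1) ^ s.card * (-1) ^ t.card := by
  have h := card_symmDiff_eq s t
  calc (-1 : ℤ) ^ (symmDiff s t).card
      = (-1) ^ (symmDiff s t).card * ((-1) ^ 2) ^ (s ∩ t).card := by norm_num
    _ = (-1) ^ ((symmDiff s t).card + 2 * (s ∩ t).card) := by rw [pow_add, pow_mul]
    _ = (-1) ^ (s.card + t.card) := by rw [h]
    _ = (-1) ^ s.card * (-1) ^ t.card := pow_add _ _ _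

theorem stmt_6 (S : Finset ℕ) (hpos : ∀ s ∈ S, 0 < s)
    (H : Finset (Finset ℕ))
    (hH : H = S.powerset.filter (fun T => T.Nonempty ∧ IsSquare (∏ s ∈ T, s))) :
    (∑ T ∈ H, (-1 : ℤ) ^ T.card) ≥ -1 := by
  classical
  set K : Finset (Finset ℕ) :=
    S.powerset.filter (fun T => IsSquare (∏ s ∈ T, s)) with hK
  have hmemK : ∀ T, T ∈ K ↔ T ⊆ S ∧ IsSquare (∏ s ∈ T, s) := by
    intro T; simp [hK]
  -- closure under symmDiff
  have hclosed : ∀ T, T ∈ K → ∀ U, U ∈ K → symmDiff T U ∈ K := by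
    intro T hT U hU
    rw [hmemK] at hT hU ⊢
    obtain ⟨hTS, hTsq⟩ := hT
    obtain ⟨hUS, hUsq⟩ := hU
    have hsub : symmDiff T U ⊆ S := by
      intro x hx
      rw [Finset.mem_symmDiff] at hx
      rcases hx with ⟨h, _⟩ | ⟨h, _⟩
      exacts [hTS h, hUS h]
    refine ⟨hsub, ?_⟩
    have e1 : (∏ s ∈ symmDiff T U, s) * (∏ s ∈ T ∩ U, s) = ∏ s ∈ T ∪ U, s := by
      rw [show symmDiff T U = (T ∪ U) \ (T ∩ U) by rw [symmDiff_eq_sup_sdiff_inf, sup_eq_union, inf_eq_inter]]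
      exact Finset.prod_sdiff inter_subset_union
    have hprod : (∏ s ∈ symmDiff T U, s) * ((∏ s ∈ T ∩ U, s) * (∏ s ∈ T ∩ U, s)) =
        (∏ s ∈ T, s) * (∏ s ∈ U, s) := by
      calc (∏ s ∈ symmDiff T U, s) * ((∏ s ∈ T ∩ U, s) * (∏ s ∈ T ∩ U, s))
          = ((∏ s ∈ symmDiff T U, s) * (∏ s ∈ T ∩ U, s)) * (∏ s ∈ T ∩ U, s) := by ring
        _ = (∏ s ∈ T ∪ U, s) * (∏ s ∈ T ∩ U, s) := by rw [e1]
        _ = (∏ s ∈ T, s) * (∏ s ∈ U, s) := Finset.prod_union_inter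
    have hcpos : 0 < ∏ s ∈ T ∩ U, s :=
      Finset.prod_pos (fun s hs => hpos s (hTS (Finset.mem_inter.mp hs).1))
    exact sq_of_mul_sq hcpos (hprod ▸ hTsq.mul hUsq)
  -- key: sum over K is nonneg
  have hKnonneg : 0 ≤ ∑ T ∈ K, (-1 : ℤ) ^ T.card := by
    by_cases hall : ∀ T ∈ K, (-1 : ℤ) ^ T.card = 1
    · rw [Finset.sum_congr rfl hall]; simp
    · push_neg at hall
      obtain ⟨U, hU, hUval⟩ := hall
      have hUneg : (-1 : ℤ) ^ U.card = -1 := by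
        rcases Nat.even_or_odd U.card with he | ho
        · exact absurd (Even.neg_one_pow he) hUval
        · exact Odd.neg_one_pow ho
      have hbij : ∑ T ∈ K, (-1 : ℤ) ^ T.card = ∑ T ∈ K, (-1 : ℤ) ^ (symmDiff T U).card := by
        refine Finset.sum_nbij' (fun T => symmDiff T U) (fun T => symmDiff T U) ?_ ?_ ?_ ?_ ?_
        · intro T hT; exact hclosed T hT U hU
        · intro T hT; exact hclosed T hT U hU
        · intro T hT; simp [symmDiff_symmDiff_cancel_right]
        · intro T hT; simp [symmDiff_symmDiff_cancel_right]
        · intro T hT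
          rw [sign_symmDiff (symmDiff T U) U, sign_symmDiff T U, hUneg]
          ring
      have hneg : ∑ T ∈ K, (-1 : ℤ) ^ T.card = -∑ T ∈ K, (-1 : ℤ) ^ T.card := by
        calc ∑ T ∈ K, (-1 : ℤ) ^ T.card
            = ∑ T ∈ K, (-1 : ℤ) ^ (symmDiff T U).card := hbij
          _ = ∑ T ∈ K, (-1 : ℤ) ^ T.card * (-1) ^ U.card := by
              refine Finset.sum_congr rfl fun T _ => sign_symmDiff T U
          _ = -∑ T ∈ K, (-1 : ℤ) ^ T.card := by
              rw [hUneg]; rw [← Finset.sum_neg_distrib]; ring_nf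
      linarith
  -- relate K and H
  have hempty : (∅ : Finset ℕ) ∈ K := by
    rw [hmemK]; exact ⟨Finset.empty_subset S, by simp⟩
  have hHK : K = insert ∅ H := by
    ext T
    simp only [hmemK, hH, Finset.mem_insert, Finset.mem_filter, Finset.mem_powerset]
    constructor
    · rintro ⟨h1, h2⟩
      rcases Finset.eq_empty_or_nonempty T with rfl | hne
      · exact Or.inl rfl
      · exact Or.inr ⟨h1, hne, h2⟩
    · rintro (rfl | ⟨h1, _, h2⟩)
      · exact ⟨Finset.empty_subset S, by simp⟩
      · exact ⟨h1, h2⟩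
  have hnotmem : (∅ : Finset ℕ) ∉ H := by
    simp [hH]
  have hsum : ∑ T ∈ K, (-1 : ℤ) ^ T.card = 1 + ∑ T ∈ H, (-1 : ℤ) ^ T.card := by
    rw [hHK, Finset.sum_insert hnotmem]; simp
  rw [hsum] at hKnonneg
  linarith
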